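/- Let E be a pseudo-effect algebra and s : E → [0,1] a state with |s(E)| = n+1 for some integer n ≥ 1. Then the following are equivalent: (i) s is an (n+1)-valued discrete state, i.e. s(E) = {0, 1/n, 2/n, ..., 1}; (ii) s(E) is a sub-effect algebra of the effect algebra [0,1]; (iii) for any t, u ∈ s(E) with t ≤ u, there exists v ∈ s(E) with t + v = u. -/

import Mathlib

/-- A pseudo-effect algebra (PEA): a structure with a partial addition `add`
(with domain of definition `D`), a zero and a one, satisfying (PE1)-(PE4)
together with the (derivable) neutrality of zero. -/
structure PEA (E : Type) where
  /-- `D a b` means that the partial sum `a + b` is defined. -/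
  D : E → E → Prop
  /-- The partial addition (its value is relevant only when `D a b` holds). -/
  add : E → E → E
  zero : E
  one : E
  /-- (PE1), definedness part. -/
  assoc_defined : ∀ a b c, (D a b ∧ D (add a b) c) ↔ (D b c ∧ D a (add b c))
  /-- (PE1), equality part. -/
  assoc_eq : ∀ a b c, D a b → D (add a b) c → add (add a b) c = add a (add b c)
  /-- (PE2), right complement. -/
  compl_right : ∀ a, ∃! d, D a d ∧ add a d = one
  /-- (PE2), left complement. -/
  compl_left : ∀ a, ∃! e, D e a ∧ add e a = one
  /-- (PE3). -/
  pe3 : ∀ a b, D a b →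
    (∃ d, D d a ∧ add d a = add a b) ∧ (∃ e, D b e ∧ add b e = add a b)
  /-- (PE4). -/
  pe4_right : ∀ a, D a one → a = zero
  pe4_left : ∀ a, D one a → a = zero
  D_zero_right : ∀ a, D a zero
  D_zero_left : ∀ a, D zero a
  add_zero : ∀ a, add a zero = a
  zero_add : ∀ a, add zero a = a

namespace PEA

variable {E : Type} (P : PEA E)

/-- The induced partial order: `a ≤ b` iff `a + c = b` for some `c`. -/
def le (a b : E) : Prop := ∃ c, P.D a c ∧ P.add a c = b

/-- The left complement `a⁻`, the unique element with `a⁻ + a = 1`. -/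
noncomputable def lneg (a : E) : E := (P.compl_left a).choose

/-- The right complement `a~`, the unique element with `a + a~ = 1`. -/
noncomputable def rneg (a : E) : E := (P.compl_right a).choose

/-- `E` is weakly commutative if `a + b` is defined iff `b + a` is defined. -/
def WeaklyCommutative : Prop := ∀ a b, P.D a b ↔ P.D b a

/-- `E` is symmetric if the two complements coincide. -/
def Symmetric : Prop := ∀ a, P.lneg a = P.rneg a

/-- A state on a PEA: a `[0,1]`-valued map, additive on existing sums, sending
`0 ↦ 0` and `1 ↦ 1`. -/
def IsState (s : E → ℝ) : Prop :=
  s P.zero = 0 ∧ s P.one = 1 ∧ (∀ a, 0 ≤ s a ∧ s a ≤ 1) ∧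
    ∀ a b, P.D a b → s (P.add a b) = s a + s b

/-- An `(n+1)`-valued discrete state: a state whose range is `{0, 1/n, …, 1}`. -/
def IsDiscreteState (n : ℕ) (s : E → ℝ) : Prop :=
  P.IsState s ∧ Set.range s = {x : ℝ | ∃ i ≤ n, x = (i : ℝ) / n}

/-- An ideal: a nonempty downward closed subset closed under existing sums. -/
def IsIdeal (I : Set E) : Prop :=
  I.Nonempty ∧ (∀ a i, i ∈ I → P.le a i → a ∈ I) ∧
    ∀ i j, i ∈ I → j ∈ I → P.D i j → P.add i j ∈ I

/-- A normal ideal: `a + i = j + a` implies `i ∈ I ↔ j ∈ I`. -/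
def IsNormalIdeal (I : Set E) : Prop :=
  P.IsIdeal I ∧ ∀ a i j, P.D a i → P.D j a → P.add a i = P.add j a → (i ∈ I ↔ j ∈ I)

/-- A maximal ideal: proper and not properly contained in a proper ideal. -/
def IsMaximalIdeal (I : Set E) : Prop :=
  P.IsIdeal I ∧ P.one ∉ I ∧ ∀ J, P.IsIdeal J → P.one ∉ J → I ⊆ J → I = J

/-- `n`-fold partial multiple of an element. -/
def nmul : ℕ → E → E
  | 0, _ => P.zero
  | k + 1, a => P.add (nmul k a) a

/-- Definedness of the `n`-fold partial multiple. -/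
def nmulD : ℕ → E → Prop
  | 0, _ => True
  | k + 1, a => nmulD k a ∧ P.D (P.nmul k a) a

/-- The set of elements of infinite isotropic index. -/
def Infinit : Set E := {a | ∀ k, P.nmulD k a}

/-- An `n`-decomposition of a PEA. -/
def IsNDecomp (n : ℕ) (F : ℕ → Set E) : Prop :=
  (∀ i, i ≤ n → (F i).Nonempty) ∧
  (∀ i j, i ≤ n → j ≤ n → i ≠ j → F i ∩ F j = ∅) ∧
  ((⋃ i ∈ Set.Iic n, F i) = Set.univ) ∧
  (∀ i, i ≤ n → P.lneg '' F i = F (n - i) ∧ P.rneg '' F i = F (n - i)) ∧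
  (∀ i j, i ≤ n → j ≤ n → ∀ x ∈ F i, ∀ y ∈ F j, P.D x y →
     i + j ≤ n ∧ P.add x y ∈ F (i + j))

/-- An `n`-perfect PEA: an `n`-decomposition with all sums `Eᵢ + Eⱼ`, `i+j < n`,
existing, and whose bottom slice is the unique maximal ideal. -/
def IsNPerfect (n : ℕ) (F : ℕ → Set E) : Prop :=
  P.IsNDecomp n F ∧
  (∀ i j, i + j < n → ∀ x ∈ F i, ∀ y ∈ F j, P.D x y) ∧
  (P.IsMaximalIdeal (F 0) ∧ ∀ J, P.IsMaximalIdeal J → J = F 0)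

end PEA

/-- Key combinatorial lemma: a subset of `[0,1]` containing `0` and `1`,
closed under existing sums and under complement, with `n+1` elements, is
exactly `{0, 1/n, …, 1}`. -/
lemma sub_ea_eq_multiples (S : Set ℝ) (n : ℕ) (hn : 1 ≤ n)
    (hS : ∀ x ∈ S, 0 ≤ x ∧ x ≤ 1) (h0 : (0:ℝ) ∈ S) (h1 : (1:ℝ) ∈ S)
    (hadd : ∀ t ∈ S, ∀ v ∈ S, t + v ≤ 1 → t + v ∈ S)
    (hcompl : ∀ t ∈ S, 1 - t ∈ S)
    (hcard : S.ncard = n + 1) :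
    S = {x : ℝ | ∃ i ≤ n, x = (i : ℝ) / n} := by
  have hfin : S.Finite := by
    by_contra h
    rw [Set.Infinite.ncard h] at hcard
    omega
  -- difference closure
  have hdiff : ∀ t ∈ S, ∀ u ∈ S, t ≤ u → u - t ∈ S := by
    intro t ht u hu htu
    have h1u := hcompl u hu
    have := hadd _ h1u t ht (by linarith [(hS u hu).2])
    have := hcompl _ this
    have : u - t = 1 - (1 - u + t) := by ring
    rw [this]
    exact hcompl _ (hadd _ h1u t ht (by linarith [(hS u hu).2]))
  -- minimum positive element α
  have hposfin : {x ∈ S | 0 < x}.Finite := hfin.subset (Set.sep_subset _ _)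
  have hposne : {x ∈ S | 0 < x}.Nonempty := ⟨1, h1, one_pos⟩
  obtain ⟨α, hαmem, hαmin⟩ := Set.exists_min_image _ id hposfin hposne
  obtain ⟨hαS, hαpos⟩ := hαmem
  have hαmin' : ∀ x ∈ S, 0 < x → α ≤ x := fun x hx hxpos => hαmin x ⟨hx, hxpos⟩
  have hα1 : α ≤ 1 := (hS α hαS).2
  -- multiples of α belong to S
  have hmul : ∀ k : ℕ, (k : ℝ) * α ≤ 1 → (k : ℝ) * α ∈ S := by
    intro k
    induction k with
    | zero => intro _; simpa using h0
    | succ k ih =>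
      intro hk1
      have hk : (k : ℝ) * α ≤ 1 := by
        push_cast at hk1 ⊢
        nlinarith
      have := hadd _ (ih hk) α hαS (by push_cast at hk1 ⊢; linarith)
      push_cast
      push_cast at this
      convert this using 1
      ring
  -- 1 is a multiple of α
  set m : ℕ := ⌊1 / α⌋₊ with hm
  have hmα : (m : ℝ) * α ≤ 1 := by
    have := Nat.floor_le (by positivity : (0:ℝ) ≤ 1 / α)
    calc (m : ℝ) * α ≤ (1 / α) * α := by
          apply mul_le_mul_of_nonneg_right this (le_of_lt hαpos)
      _ = 1 := by field_simp
  have hmαS : (m : ℝ) * α ∈ S := hmul m hmα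
  have hmα1 : (m : ℝ) * α = 1 := by
    by_contra h
    have hlt : (m : ℝ) * α < 1 := lt_of_le_of_ne hmα h
    have hd : 1 - (m : ℝ) * α ∈ S := hdiff _ hmαS 1 h1 hmα
    have := hαmin' _ hd (by linarith)
    have hsucc : ((m : ℕ) + 1 : ℝ) * α ≤ 1 := by push_cast; nlinarith
    have : ((m : ℕ) + 1 : ℝ) ≤ 1 / α := by
      rw [le_div_iff₀ hαpos]; linarith [hsucc]
    have : (m + 1 : ℕ) ≤ m := by
      rw [hm]
      apply Nat.le_floor
      push_cast
      push_cast at this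
      linarith
    omega
  have hmpos : 1 ≤ m := by
    by_contra h
    push_neg at h
    interval_cases m
    simp at hmα1
  -- every element of S is a multiple of α
  have hall : ∀ x ∈ S, ∃ k ≤ m, x = (k : ℝ) * α := by
    intro x hx
    obtain ⟨hx0, hx1⟩ := hS x hx
    set k : ℕ := ⌊x / α⌋₊ with hk
    have hkα : (k : ℝ) * α ≤ x := by
      have := Nat.floor_le (by positivity : (0:ℝ) ≤ x / α)
      calc (k : ℝ) * α ≤ (x / α) * α := by
            apply mul_le_mul_of_nonneg_right this (le_of_lt hαpos)
        _ = x := by field_simp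
    have hkαS : (k : ℝ) * α ∈ S := hmul k (le_trans hkα hx1)
    have hdS : x - (k : ℝ) * α ∈ S := hdiff _ hkαS x hx hkα
    have hlt : x - (k : ℝ) * α < α := by
      have := Nat.lt_floor_add_one (x / α)
      have h2 : x / α < (k : ℝ) + 1 := by push_cast at this ⊢; linarith
      have := (div_lt_iff₀ hαpos).mp h2
      linarith
    have heq : x = (k : ℝ) * α := by
      by_contra h
      have hpos : 0 < x - (k : ℝ) * α := lt_of_le_of_ne (by linarith) (fun he => h (by linarith))
      have := hαmin' _ hdS hpos
      linarith
    refine ⟨k, ?_, heq⟩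
    by_contra h
    push_neg at h
    have : (m : ℝ) + 1 ≤ (k : ℝ) := by exact_mod_cast h
    have : ((m : ℝ) + 1) * α ≤ (k : ℝ) * α :=
      mul_le_mul_of_nonneg_right this (le_of_lt hαpos)
    nlinarith
  -- S is the image of Iic m under k ↦ k * α
  have hSeq : S = (fun k : ℕ => (k : ℝ) * α) '' Set.Iic m := by
    apply Set.eq_of_subset_of_subset
    · intro x hx
      obtain ⟨k, hk, hkx⟩ := hall x hx
      exact ⟨k, hk, hkx.symm⟩
    · rintro x ⟨k, hk, rfl⟩
      apply hmul
      calc (k : ℝ) * α ≤ (m : ℝ) * α := by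
            apply mul_le_mul_of_nonneg_right _ (le_of_lt hαpos)
            exact_mod_cast hk
        _ = 1 := hmα1
  have hinj : Set.InjOn (fun k : ℕ => (k : ℝ) * α) (Set.Iic m) := by
    intro a _ b _ hab
    simp only at hab
    have : (a : ℝ) = b := mul_right_cancel₀ (ne_of_gt hαpos) hab
    exact_mod_cast this
  have hiic : (Set.Iic m : Set ℕ).ncard = m + 1 := by
    rw [show (Set.Iic m : Set ℕ) = ↑(Finset.Iic m) by simp]
    rw [Set.ncard_coe_finset, Nat.card_Iic]
  have hmn : m = n := by
    have := Set.ncard_image_of_injOn hinj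
    rw [← hSeq, hcard, hiic] at this
    omega
  subst hmn
  have hαval : α = 1 / (m : ℝ) := by
    have hm0 : (m : ℝ) ≠ 0 := by positivity
    field_simp
    linarith [hmα1]
  rw [hSeq]
  ext x
  constructor
  · rintro ⟨k, hk, rfl⟩
    exact ⟨k, hk, by rw [hαval]; ring⟩
  · rintro ⟨i, hi, rfl⟩
    exact ⟨i, hi, by rw [hαval]; ring⟩

/-- for a state `s` on a PEA with `|s(E)| = n+1`, the following are
equivalent: (i) `s` is an `(n+1)`-valued discrete state; (ii) `s(E)` is a
sub-effect algebra of `[0,1]`; (iii) `s(E)` is closed under differences of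
comparable elements. -/
theorem stmt1 {E : Type} (P : PEA E) (n : ℕ) (hn : 1 ≤ n) (s : E → ℝ)
    (hs : P.IsState s) (hcard : (Set.range s).ncard = n + 1) :
    (P.IsDiscreteState n s ↔
      ((0 : ℝ) ∈ Set.range s ∧ (1 : ℝ) ∈ Set.range s ∧
        (∀ t ∈ Set.range s, ∀ v ∈ Set.range s, t + v ≤ 1 → t + v ∈ Set.range s) ∧
        (∀ t ∈ Set.range s, 1 - t ∈ Set.range s))) ∧
    (P.IsDiscreteState n s ↔
      (∀ t ∈ Set.range s, ∀ u ∈ Set.range s, t ≤ u →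
        ∃ v ∈ Set.range s, t + v = u)) := by
  obtain ⟨hz, ho, hbd, hadd⟩ := hs
  have h0mem : (0:ℝ) ∈ Set.range s := ⟨P.zero, hz⟩
  have h1mem : (1:ℝ) ∈ Set.range s := ⟨P.one, ho⟩
  have hbd' : ∀ x ∈ Set.range s, 0 ≤ x ∧ x ≤ 1 := by
    rintro x ⟨a, rfl⟩; exact hbd a
  -- (i) → (ii)
  have h12 : P.IsDiscreteState n s →
      ((0 : ℝ) ∈ Set.range s ∧ (1 : ℝ) ∈ Set.range s ∧
        (∀ t ∈ Set.range s, ∀ v ∈ Set.range s, t + v ≤ 1 → t + v ∈ Set.range s) ∧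
        (∀ t ∈ Set.range s, 1 - t ∈ Set.range s)) := by
    rintro ⟨-, hrange⟩
    have hn0 : (n : ℝ) ≠ 0 := by positivity
    refine ⟨h0mem, h1mem, ?_, ?_⟩
    · intro t ht v hv htv
      rw [hrange] at ht hv ⊢
      obtain ⟨i, hi, rfl⟩ := ht
      obtain ⟨j, hj, rfl⟩ := hv
      refine ⟨i + j, ?_, by push_cast; ring⟩
      by_contra h
      push_neg at h
      have : (n : ℝ) + 1 ≤ (i : ℝ) + j := by exact_mod_cast h
      rw [← add_div, div_le_one (by positivity)] at htv
      linarith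
    · intro t ht
      rw [hrange] at ht ⊢
      obtain ⟨i, hi, rfl⟩ := ht
      refine ⟨n - i, by omega, ?_⟩
      have : ((n - i : ℕ) : ℝ) = (n : ℝ) - i := by
        push_cast [Nat.cast_sub hi]; ring
      rw [this]
      field_simp
  -- (ii) → (i)
  have h21 : ((0 : ℝ) ∈ Set.range s ∧ (1 : ℝ) ∈ Set.range s ∧
        (∀ t ∈ Set.range s, ∀ v ∈ Set.range s, t + v ≤ 1 → t + v ∈ Set.range s) ∧
        (∀ t ∈ Set.range s, 1 - t ∈ Set.range s)) → P.IsDiscreteState n s := by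
    rintro ⟨h0', h1', ha', hc'⟩
    exact ⟨⟨hz, ho, hbd, hadd⟩,
      sub_ea_eq_multiples (Set.range s) n hn hbd' h0' h1' ha' hc' hcard⟩
  -- (ii) → (iii)
  have h23 : ((0 : ℝ) ∈ Set.range s ∧ (1 : ℝ) ∈ Set.range s ∧
        (∀ t ∈ Set.range s, ∀ v ∈ Set.range s, t + v ≤ 1 → t + v ∈ Set.range s) ∧
        (∀ t ∈ Set.range s, 1 - t ∈ Set.range s)) →
      (∀ t ∈ Set.range s, ∀ u ∈ Set.range s, t ≤ u →
        ∃ v ∈ Set.range s, t + v = u) := by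
    rintro ⟨h0', h1', ha', hc'⟩ t ht u hu htu
    refine ⟨u - t, ?_, by ring⟩
    have h1u := hc' u hu
    have := ha' _ h1u t ht (by linarith [(hbd' u hu).2])
    have := hc' _ this
    have heq : u - t = 1 - (1 - u + t) := by ring
    rw [heq]
    exact this
  -- (iii) → (ii)
  have h32 : (∀ t ∈ Set.range s, ∀ u ∈ Set.range s, t ≤ u →
        ∃ v ∈ Set.range s, t + v = u) →
      ((0 : ℝ) ∈ Set.range s ∧ (1 : ℝ) ∈ Set.range s ∧
        (∀ t ∈ Set.range s, ∀ v ∈ Set.range s, t + v ≤ 1 → t + v ∈ Set.range s) ∧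
        (∀ t ∈ Set.range s, 1 - t ∈ Set.range s)) := by
    intro h3
    have hc' : ∀ t ∈ Set.range s, 1 - t ∈ Set.range s := by
      intro t ht
      obtain ⟨v, hv, hveq⟩ := h3 t ht 1 h1mem (hbd' t ht).2
      have : v = 1 - t := by linarith
      rwa [← this]
    refine ⟨h0mem, h1mem, ?_, hc'⟩
    intro t ht v hv htv
    have h1t : 1 - t ∈ Set.range s := hc' t ht
    obtain ⟨w, hw, hweq⟩ := h3 v hv (1 - t) h1t (by linarith)
    have hwval : w = 1 - t - v := by linarith
    have : 1 - w ∈ Set.range s := hc' w hw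
    have heq : 1 - w = t + v := by rw [hwval]; ring
    rwa [← heq]
  exact ⟨⟨h12, h21⟩, ⟨fun h => h23 (h12 h), fun h => h21 (h32 h)⟩⟩
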